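/- The homomorphism ρ₁ : Aut(ℋ_{f0}) → GL(2,ℤ) induced by the action of automorphisms on the abelianization ℋ_{f0}/Z(ℋ_{f0}) ≅ ℤ² is surjective. -/
import Mathlib


/-- The fibrewise rationalization of the discrete Heisenberg group: ℚ × ℤ × ℤ. -/
def Hf : Type := ℚ × ℤ × ℤ

namespace Hf

def mk (a : ℚ) (b c : ℤ) : Hf := (a, b, c)

@[simp] lemma fst_mk (a : ℚ) (b c : ℤ) : (mk a b c).1 = a := rfl
@[simp] lemma snd_fst_mk (a : ℚ) (b c : ℤ) : (mk a b c).2.1 = b := rfl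
@[simp] lemma snd_snd_mk (a : ℚ) (b c : ℤ) : (mk a b c).2.2 = c := rfl

lemma mk_inj {a x : ℚ} {b c y z : ℤ} : mk a b c = mk x y z ↔ a = x ∧ b = y ∧ c = z :=
  ⟨fun h => ⟨congrArg (fun p : Hf => p.1) h, congrArg (fun p : Hf => p.2.1) h,
      congrArg (fun p : Hf => p.2.2) h⟩,
   fun h => by rw [h.1, h.2.1, h.2.2]⟩

lemma eta (p : Hf) : p = mk p.1 p.2.1 p.2.2 := rfl

instance : One Hf := ⟨mk 0 0 0⟩
instance : Mul Hf :=
  ⟨fun p q => mk (p.1 + q.1 + (p.2.1 : ℚ) * (q.2.2 : ℚ)) (p.2.1 + q.2.1) (p.2.2 + q.2.2)⟩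
instance : Inv Hf :=
  ⟨fun p => mk (-p.1 + (p.2.1 : ℚ) * (p.2.2 : ℚ)) (-p.2.1) (-p.2.2)⟩

lemma mul_def (p q : Hf) :
    p * q = mk (p.1 + q.1 + (p.2.1 : ℚ) * (q.2.2 : ℚ)) (p.2.1 + q.2.1) (p.2.2 + q.2.2) := rfl
lemma one_def : (1 : Hf) = mk 0 0 0 := rfl
lemma inv_def (p : Hf) :
    p⁻¹ = mk (-p.1 + (p.2.1 : ℚ) * (p.2.2 : ℚ)) (-p.2.1) (-p.2.2) := rfl

instance instGroup : Group Hf := Group.ofLeftAxioms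
  (by intro p q r
      simp only [mul_def, fst_mk, snd_fst_mk, snd_snd_mk, mk_inj]
      refine ⟨by push_cast; ring, by ring, by ring⟩)
  (by intro p
      rw [eta p]
      simp only [mul_def, one_def, fst_mk, snd_fst_mk, snd_snd_mk, mk_inj]
      refine ⟨by push_cast; ring, by ring, by ring⟩)
  (by intro p
      simp only [mul_def, one_def, inv_def, fst_mk, snd_fst_mk, snd_snd_mk, mk_inj]
      refine ⟨by push_cast; ring, by ring, by ring⟩)

lemma mk_mul (a x : ℚ) (b c y z : ℤ) :
    mk a b c * mk x y z = mk (a + x + (b : ℚ) * (z : ℚ)) (b + y) (c + z) := by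
  simp [mul_def]

end Hf

/-- The projection of ℋ_{f0} onto ℋ_{f0}/Z(ℋ_{f0}) = ℤ², written as a vector. -/
def hfPr (g : Hf) : Fin 2 → ℤ := ![g.2.1, g.2.2]

theorem hf_aux (A B C E : ℤ) (hdet : A*E - B*C = 1 ∨ A*E - B*C = -1) :
    ∃ h : Hf ≃* Hf, ∀ g : Hf,
      (h g).2.1 = A*g.2.1 + B*g.2.2 ∧ (h g).2.2 = C*g.2.1 + E*g.2.2 := by
  have hd2int : (A*E - B*C) * (A*E - B*C) = 1 := by
    rcases hdet with h | h <;> rw [h] <;> norm_num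
  have hne : (A*E - B*C) ≠ 0 := by
    rcases hdet with h | h <;> rw [h] <;> norm_num
  have hd2 : ((A*E - B*C : ℤ) : ℚ) * ((A*E - B*C : ℤ) : ℚ) = 1 := by
    exact_mod_cast hd2int
  have hdne : ((A*E - B*C : ℤ) : ℚ) ≠ 0 := by exact_mod_cast hne
  let Q : ℤ → ℤ → ℚ := fun b c =>
    (A*C : ℚ) * b * (b-1) / 2 + (B*E : ℚ) * c * (c-1) / 2 + (B*C : ℚ) * b * c
  let φ : Hf →* Hf :=
  { toFun := fun p => Hf.mk (((A*E - B*C : ℤ) : ℚ) * p.1 + Q p.2.1 p.2.2)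
      (A*p.2.1 + B*p.2.2) (C*p.2.1 + E*p.2.2)
    map_one' := by
      simp only [Hf.one_def, Hf.fst_mk, Hf.snd_fst_mk, Hf.snd_snd_mk, Hf.mk_inj, Q]
      norm_num
    map_mul' := by
      intro p r
      simp only [Hf.mul_def, Hf.fst_mk, Hf.snd_fst_mk, Hf.snd_snd_mk, Hf.mk_inj, Q]
      refine ⟨by push_cast; ring, by ring, by ring⟩ }
  have hφ : ∀ p : Hf, φ p = Hf.mk (((A*E - B*C : ℤ) : ℚ) * p.1 + Q p.2.1 p.2.2)
      (A*p.2.1 + B*p.2.2) (C*p.2.1 + E*p.2.2) := fun p => rfl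
  have hinj : Function.Injective φ := by
    intro p r h
    rw [hφ, hφ, Hf.mk_inj] at h
    obtain ⟨h1, h2, h3⟩ := h
    have hb : p.2.1 = r.2.1 := by
      have : (A*E - B*C) * p.2.1 = (A*E - B*C) * r.2.1 := by linear_combination E*h2 - B*h3
      exact mul_left_cancel₀ hne this
    have hc : p.2.2 = r.2.2 := by
      have : (A*E - B*C) * p.2.2 = (A*E - B*C) * r.2.2 := by linear_combination A*h3 - C*h2
      exact mul_left_cancel₀ hne this
    have ha : p.1 = r.1 := by
      rw [hb, hc] at h1
      have := add_right_cancel h1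
      exact mul_left_cancel₀ hdne this
    rw [Hf.eta p, Hf.eta r, Hf.mk_inj]
    exact ⟨ha, hb, hc⟩
  have hsurj : Function.Surjective φ := by
    intro r
    refine ⟨Hf.mk (((A*E - B*C : ℤ) : ℚ) *
        (r.1 - Q ((A*E - B*C)*(E*r.2.1 - B*r.2.2)) ((A*E - B*C)*(A*r.2.2 - C*r.2.1))))
      ((A*E - B*C)*(E*r.2.1 - B*r.2.2)) ((A*E - B*C)*(A*r.2.2 - C*r.2.1)), ?_⟩
    rw [hφ]
    simp only [Hf.fst_mk, Hf.snd_fst_mk, Hf.snd_snd_mk]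
    rw [Hf.eta r, Hf.mk_inj]
    simp only [Hf.fst_mk, Hf.snd_fst_mk, Hf.snd_snd_mk]
    refine ⟨?_, by linear_combination r.2.1 * hd2int, by linear_combination r.2.2 * hd2int⟩
    linear_combination (r.1 - Q ((A*E - B*C)*(E*r.2.1 - B*r.2.2))
      ((A*E - B*C)*(A*r.2.2 - C*r.2.1))) * hd2
  refine ⟨MulEquiv.ofBijective φ ⟨hinj, hsurj⟩, fun g => ?_⟩
  have : (MulEquiv.ofBijective φ ⟨hinj, hsurj⟩) g = φ g := rfl
  rw [this, hφ]
  exact ⟨rfl, rfl⟩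

/-- ρ₁ : Aut(ℋ_{f0}) → GL(2,ℤ) is surjective: every integral matrix of determinant ±1
is induced on ℤ² = ℋ_{f0}/Z(ℋ_{f0}) by some automorphism of ℋ_{f0}. -/
theorem hf_rho1_surjective (M : GL (Fin 2) ℤ) :
    ∃ h : Hf ≃* Hf, ∀ g : Hf,
      hfPr (h g) = Matrix.mulVec (M : Matrix (Fin 2) (Fin 2) ℤ) (hfPr g) := by
  have hu : IsUnit (M : Matrix (Fin 2) (Fin 2) ℤ).det := by
    have h1 : IsUnit (M : Matrix (Fin 2) (Fin 2) ℤ) := ⟨M, rfl⟩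
    simpa using h1.map Matrix.detMonoidHom
  have hdet : (M : Matrix (Fin 2) (Fin 2) ℤ) 0 0 * (M : Matrix (Fin 2) (Fin 2) ℤ) 1 1 -
      (M : Matrix (Fin 2) (Fin 2) ℤ) 0 1 * (M : Matrix (Fin 2) (Fin 2) ℤ) 1 0 = 1 ∨
      (M : Matrix (Fin 2) (Fin 2) ℤ) 0 0 * (M : Matrix (Fin 2) (Fin 2) ℤ) 1 1 -
      (M : Matrix (Fin 2) (Fin 2) ℤ) 0 1 * (M : Matrix (Fin 2) (Fin 2) ℤ) 1 0 = -1 := by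
    rw [← Matrix.det_fin_two]
    exact Int.isUnit_iff.mp hu
  obtain ⟨h, hh⟩ := hf_aux ((M : Matrix (Fin 2) (Fin 2) ℤ) 0 0)
    ((M : Matrix (Fin 2) (Fin 2) ℤ) 0 1) ((M : Matrix (Fin 2) (Fin 2) ℤ) 1 0)
    ((M : Matrix (Fin 2) (Fin 2) ℤ) 1 1) hdet
  refine ⟨h, fun g => ?_⟩
  funext i
  fin_cases i <;>
    simp [hfPr, Matrix.mulVec, dotProduct, Fin.sum_univ_two, (hh g).1, (hh g).2]
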